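/- Let X be an exchangeable sequence of {0,1}-valued random variables. Then for every fixed m ≥ 1, the m-th moment of the frequency converges to the probability that m trials are all successes: E[((X_0 + ⋯ + X_{n−1})/n)^m] → ω_m^(m) as n → ∞, where ω_m^(m) = P(X_0 = ⋯ = X_{m−1} = 1). -/

import Mathlib

set_option linter.unusedSectionVars false


open MeasureTheory ProbabilityTheory Filter

def Exchangeable {Ω : Type*} [MeasurableSpace Ω] (P : Measure Ω) (X : ℕ → Ω → ℕ) : Prop :=
  ∀ (n : ℕ) (σ : Equiv.Perm (Fin n)),
    P.map (fun ω => fun i : Fin n => X (σ i) ω) =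
      P.map (fun ω => fun i : Fin n => X i ω)

/-- `allOnes P X h = ω_h^(h) = P(X_0 = ⋯ = X_{h-1} = 1)`, the probability that the first `h`
trials are all successes. -/
noncomputable def allOnes {Ω : Type*} [MeasurableSpace Ω] (P : Measure Ω)
    (X : ℕ → Ω → ℕ) (h : ℕ) : ℝ :=
  (P {ω | ∀ i < h, X i ω = 1}).toReal

section Aux

open Function

/-- Any injective map `Fin m → Fin n` extends to a permutation of `Fin n`. -/
lemma exists_perm_extend' {m n : ℕ} (h : m ≤ n) (f : Fin m → Fin n) (hf : Injective f) :
    ∃ σ : Equiv.Perm (Fin n), ∀ j : Fin m, σ (Fin.castLE h j) = f j := by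
  classical
  have hc : Injective (Fin.castLE h) := Fin.castLE_injective h
  let e : {x : Fin n // x ∈ Set.range (Fin.castLE h)} ≃ {x : Fin n // x ∈ Set.range f} :=
    (Equiv.ofInjective _ hc).symm.trans (Equiv.ofInjective f hf)
  refine ⟨e.extendSubtype, fun j => ?_⟩
  rw [Equiv.extendSubtype_apply_of_mem e _ ⟨j, rfl⟩]
  simp [e]

/-- By exchangeability, the probability that the trials at any `m` distinct indices are all
successes equals the probability that the first `m` trials are all successes. -/
lemma measure_inj_eq' {Ω : Type*} [MeasurableSpace Ω] (P : Measure Ω) (X : ℕ → Ω → ℕ)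
    (hXmeas : ∀ k, Measurable (X k)) (hexch : Exchangeable P X)
    {m n : ℕ} (p : Fin m → Fin n) (hp : Injective p) :
    P {ω | ∀ j : Fin m, X (p j) ω = 1} = P {ω | ∀ i < m, X i ω = 1} := by
  have hmn : m ≤ n := by
    simpa using Fintype.card_le_of_injective p hp
  obtain ⟨σ, hσ⟩ := exists_perm_extend' hmn p hp
  have hB : MeasurableSet {v : Fin n → ℕ | ∀ j : Fin m, v (Fin.castLE hmn j) = 1} := by
    have : {v : Fin n → ℕ | ∀ j : Fin m, v (Fin.castLE hmn j) = 1} =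
        ⋂ j : Fin m, (fun v : Fin n → ℕ => v (Fin.castLE hmn j)) ⁻¹' {1} := by
      ext v; simp [Set.mem_iInter]
    rw [this]
    exact MeasurableSet.iInter fun j => (measurable_pi_apply _) (measurableSet_singleton 1)
  have hm1 : Measurable (fun ω => fun i : Fin n => X (σ i) ω) :=
    measurable_pi_lambda _ fun i => hXmeas _
  have hm2 : Measurable (fun ω => fun i : Fin n => X i ω) :=
    measurable_pi_lambda _ fun i => hXmeas _
  have key := congrArg (fun μ : Measure (Fin n → ℕ) =>
    μ {v : Fin n → ℕ | ∀ j : Fin m, v (Fin.castLE hmn j) = 1}) (hexch n σ)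
  simp only [Measure.map_apply hm1 hB, Measure.map_apply hm2 hB] at key
  have e1 : (fun ω => fun i : Fin n => X (σ i) ω) ⁻¹'
      {v : Fin n → ℕ | ∀ j : Fin m, v (Fin.castLE hmn j) = 1} =
      {ω | ∀ j : Fin m, X (p j) ω = 1} := by
    ext ω; simp only [Set.mem_preimage, Set.mem_setOf_eq]
    refine forall_congr' fun j => ?_
    rw [hσ j]
  have e2 : (fun ω => fun i : Fin n => X i ω) ⁻¹'
      {v : Fin n → ℕ | ∀ j : Fin m, v (Fin.castLE hmn j) = 1} =
      {ω | ∀ i < m, X i ω = 1} := by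
    ext ω; simp only [Set.mem_preimage, Set.mem_setOf_eq, Fin.coe_castLE]
    constructor
    · intro h i hi; exact h ⟨i, hi⟩
    · intro h j; exact h j j.isLt
  rw [e1, e2] at key
  exact key

variable {Ω : Type*} [MeasurableSpace Ω] (P : Measure Ω) [IsProbabilityMeasure P]
  (X : ℕ → Ω → ℕ)

lemma meas_A' (hXmeas : ∀ k, Measurable (X k)) {m : ℕ} (p : Fin m → ℕ) :
    MeasurableSet {ω | ∀ j : Fin m, X (p j) ω = 1} := by
  have : {ω | ∀ j : Fin m, X (p j) ω = 1} = ⋂ j : Fin m, (X (p j)) ⁻¹' {1} := by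
    ext ω; simp
  rw [this]
  exact MeasurableSet.iInter fun j => (hXmeas _) (measurableSet_singleton 1)

lemma prod_eq_indicator' (hX01 : ∀ k ω, X k ω ≤ 1) {m : ℕ} (p : Fin m → ℕ) (ω : Ω) :
    (∏ j : Fin m, (X (p j) ω : ℝ)) =
      Set.indicator {ω | ∀ j : Fin m, X (p j) ω = 1} (fun _ => (1:ℝ)) ω := by
  by_cases h : ω ∈ {ω | ∀ j : Fin m, X (p j) ω = 1}
  · rw [Set.indicator_of_mem h]
    refine Finset.prod_eq_one fun j _ => ?_
    rw [h j]; norm_num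
  · rw [Set.indicator_of_notMem h]
    simp only [Set.mem_setOf_eq, not_forall] at h
    obtain ⟨j, hj⟩ := h
    have h0 : X (p j) ω = 0 := by have := hX01 (p j) ω; omega
    refine Finset.prod_eq_zero (Finset.mem_univ j) ?_
    rw [h0]; norm_num

lemma integral_prod_eq' (hX01 : ∀ k ω, X k ω ≤ 1) (hXmeas : ∀ k, Measurable (X k))
    {m : ℕ} (p : Fin m → ℕ) :
    ∫ ω, ∏ j : Fin m, (X (p j) ω : ℝ) ∂P = (P {ω | ∀ j : Fin m, X (p j) ω = 1}).toReal := by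
  rw [show (fun ω => ∏ j : Fin m, (X (p j) ω : ℝ)) =
      Set.indicator {ω | ∀ j : Fin m, X (p j) ω = 1} (fun _ => (1:ℝ)) from
    funext (prod_eq_indicator' X hX01 p)]
  exact integral_indicator_one (meas_A' X hXmeas p)

lemma integrable_prod' (hX01 : ∀ k ω, X k ω ≤ 1) (hXmeas : ∀ k, Measurable (X k))
    {m : ℕ} (p : Fin m → ℕ) :
    Integrable (fun ω => ∏ j : Fin m, (X (p j) ω : ℝ)) P := by
  rw [show (fun ω => ∏ j : Fin m, (X (p j) ω : ℝ)) =
      Set.indicator {ω | ∀ j : Fin m, X (p j) ω = 1} (fun _ => (1:ℝ)) from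
    funext (prod_eq_indicator' X hX01 p)]
  exact (integrable_const 1).indicator (meas_A' X hXmeas p)

lemma card_inj' (m n : ℕ) :
    (Finset.univ.filter (fun p : Fin m → Fin n => Function.Injective p)).card =
      Nat.descFactorial n m := by
  classical
  rw [← Fintype.card_subtype]
  rw [Fintype.card_congr (Equiv.subtypeInjectiveEquivEmbedding (Fin m) (Fin n))]
  simp [Fintype.card_embedding_eq]

lemma tendsto_ratio' (m : ℕ) :
    Tendsto (fun n : ℕ => (Nat.descFactorial n m : ℝ) / (n : ℝ) ^ m) atTop (nhds 1) := by
  have hlim : Tendsto (fun n : ℕ => ∏ j ∈ Finset.range m, (1 - (j : ℝ) / n)) atTop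
      (nhds (∏ j ∈ Finset.range m, (1 : ℝ))) := by
    refine tendsto_finset_prod _ fun j _ => ?_
    have h := (tendsto_const_nhds (x := (1:ℝ)) (f := atTop)).sub
      (tendsto_const_div_atTop_nhds_zero_nat (j : ℝ))
    simpa using h
  rw [Finset.prod_const_one] at hlim
  refine hlim.congr' ?_
  filter_upwards [eventually_ge_atTop m, eventually_ge_atTop 1] with n hnm hn1
  have hn0 : (n : ℝ) ≠ 0 := by positivity
  rw [Nat.descFactorial_eq_prod_range, Nat.cast_prod,
    show ((n : ℝ)) ^ m = ∏ _i ∈ Finset.range m, (n : ℝ) by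
      rw [Finset.prod_const, Finset.card_range],
    ← Finset.prod_div_distrib]
  refine Finset.prod_congr rfl fun i hi => ?_
  have hin : i ≤ n := le_trans (le_of_lt (Finset.mem_range.mp hi)) hnm
  rw [Nat.cast_sub hin]
  field_simp

lemma key_identity' (hX01 : ∀ k ω, X k ω ≤ 1) (hXmeas : ∀ k, Measurable (X k))
    (hXmi : ∀ {m n : ℕ} (p : Fin m → Fin n), Function.Injective p →
      P {ω | ∀ j : Fin m, X (p j) ω = 1} = P {ω | ∀ i < m, X i ω = 1})
    (m n : ℕ) :
    ∫ ω, ((∑ i ∈ Finset.range n, (X i ω : ℝ)) / n) ^ m ∂P =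
      ((Nat.descFactorial n m : ℝ) * allOnes P X m +
        ∑ p ∈ Finset.univ.filter (fun p : Fin m → Fin n => ¬ Function.Injective p),
          (P {ω | ∀ j : Fin m, X (p j) ω = 1}).toReal) / (n : ℝ) ^ m := by
  classical
  have step1 : ∀ ω, ((∑ i ∈ Finset.range n, (X i ω : ℝ)) / n) ^ m =
      (∑ p : Fin m → Fin n, ∏ j : Fin m, (X (p j) ω : ℝ)) / (n : ℝ) ^ m := by
    intro ω
    rw [div_pow]
    congr 1
    rw [← Fin.sum_univ_eq_sum_range (fun i => (X i ω : ℝ)) n,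
      Finset.sum_pow' Finset.univ (fun i : Fin n => (X (i : ℕ) ω : ℝ)) m,
      Fintype.piFinset_univ]
  simp only [step1]
  rw [integral_div, integral_finset_sum _ (fun p _ => integrable_prod' P X hX01 hXmeas _)]
  congr 1
  rw [← Finset.sum_filter_add_sum_filter_not Finset.univ
    (fun p : Fin m → Fin n => Function.Injective p)]
  congr 1
  · rw [Finset.sum_congr rfl (fun p hp => ?_), Finset.sum_const, card_inj',
      nsmul_eq_mul]
    rw [integral_prod_eq' P X hX01 hXmeas]
    rw [hXmi p (Finset.mem_filter.mp hp).2]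
    rfl
  · exact Finset.sum_congr rfl fun p _ => integral_prod_eq' P X hX01 hXmeas _

end Aux

/-- for every fixed `m ≥ 1`, the `m`-th moment of the frequency converges to the
probability that `m` trials are all successes:
`E[((X_0 + ⋯ + X_{n-1})/n)^m] → ω_m^(m)` as `n → ∞`. -/
theorem deFinetti_stmt9 {Ω : Type*} [MeasurableSpace Ω] (P : Measure Ω)
    [IsProbabilityMeasure P] (X : ℕ → Ω → ℕ)
    (hX01 : ∀ k ω, X k ω ≤ 1) (hXmeas : ∀ k, Measurable (X k))
    (hexch : Exchangeable P X) (m : ℕ) (hm : 1 ≤ m) :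
    Tendsto
      (fun n : ℕ => ∫ ω, ((∑ i ∈ Finset.range n, X i ω : ℝ) / n) ^ m ∂P)
      atTop (nhds (allOnes P X m)) := by
  classical
  have hXmi : ∀ {m n : ℕ} (p : Fin m → Fin n), Function.Injective p →
      P {ω | ∀ j : Fin m, X (p j) ω = 1} = P {ω | ∀ i < m, X i ω = 1} :=
    fun p hp => measure_inj_eq' P X hXmeas hexch p hp
  set w := allOnes P X m with hw
  have hw0 : 0 ≤ w := ENNReal.toReal_nonneg
  set t : ℕ → ℝ := fun n => (Nat.descFactorial n m : ℝ) / (n : ℝ) ^ m with ht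
  have htlim := tendsto_ratio' m
  have hL : Tendsto (fun n => t n * w) atTop (nhds w) := by
    simpa using htlim.mul_const w
  have hU : Tendsto (fun n => t n * w + (1 - t n)) atTop (nhds w) := by
    have := hL.add ((tendsto_const_nhds (x := (1:ℝ)) (f := atTop)).sub htlim)
    simpa using this
  refine tendsto_of_tendsto_of_tendsto_of_le_of_le' hL hU ?_ ?_
  all_goals
    filter_upwards [eventually_ge_atTop 1] with n hn
    rw [key_identity' P X hX01 hXmeas hXmi m n]
    have hnp : (0:ℝ) < (n:ℝ) ^ m := by positivity
    set R := ∑ p ∈ Finset.univ.filter (fun p : Fin m → Fin n => ¬ Function.Injective p),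
        (P {ω | ∀ j : Fin m, X (p j) ω = 1}).toReal with hRdef
    have hR0 : 0 ≤ R := Finset.sum_nonneg fun p _ => ENNReal.toReal_nonneg
  · calc t n * w = (Nat.descFactorial n m : ℝ) * w / (n:ℝ)^m := by
          rw [ht]; ring
      _ ≤ ((Nat.descFactorial n m : ℝ) * w + R) / (n:ℝ)^m := by gcongr; linarith
  · have hdle : Nat.descFactorial n m ≤ n ^ m := Nat.descFactorial_le_pow n m
    have hcard : (Finset.univ.filter (fun p : Fin m → Fin n => ¬ Function.Injective p)).card
        = n ^ m - Nat.descFactorial n m := by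
      have h1 := Finset.card_filter_add_card_filter_not
        (s := (Finset.univ : Finset (Fin m → Fin n)))
        (p := fun p : Fin m → Fin n => Function.Injective p)
      rw [card_inj'] at h1
      have h2 : (Finset.univ : Finset (Fin m → Fin n)).card = n ^ m := by
        simp [Finset.card_univ, Fintype.card_fun]
      omega
    have hRle : R ≤ (n:ℝ)^m - (Nat.descFactorial n m : ℝ) := by
      calc R ≤ (Finset.univ.filter
            (fun p : Fin m → Fin n => ¬ Function.Injective p)).card • (1:ℝ) := by
            refine Finset.sum_le_card_nsmul _ _ 1 fun p _ => ?_
            exact ENNReal.toReal_le_of_le_ofReal one_pos.le (by simpa using prob_le_one)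
        _ = ((n ^ m - Nat.descFactorial n m : ℕ) : ℝ) := by rw [hcard]; simp
        _ = (n:ℝ)^m - (Nat.descFactorial n m : ℝ) := by
            push_cast [Nat.cast_sub hdle]; ring
    have hUeq : t n * w + (1 - t n)
        = ((Nat.descFactorial n m : ℝ) * w
            + ((n:ℝ)^m - (Nat.descFactorial n m : ℝ))) / (n:ℝ)^m := by
      rw [ht]; field_simp
    rw [hUeq]
    gcongr
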